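/- Let A be an invertible d×d matrix over ℚ and H a subgroup of ℚ^d with A(H) = H whose ℚ-linear span equals ℚ^d, and let G = ℤ ⋉_A H. If ψ : G → Aff₊(ℝ) is a group homomorphism with non-Abelian image, then ψ(0,h) is a translation for every h ∈ H, and there exist a real number λ > 0 with λ ≠ 1, a vector v ∈ ℝ^d with Aᵀv = λv, and an element γ ∈ Aff₊(ℝ) such that γ ∘ ψ(n,h) ∘ γ⁻¹ = (x ↦ λⁿx + ⟨v,h⟩) for all (n,h) ∈ G, where ⟨v,h⟩ denotes the standard pairing Σᵢ vᵢhᵢ. -/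

import Mathlib

open Matrix Set

noncomputable section

/-- The group `Aff₊(ℝ)` of orientation-preserving affine transformations `x ↦ a·x + b`
(`a > 0`, composition as group law), as a subgroup of the permutation group of `ℝ`. -/
def AffPos : Subgroup (Equiv.Perm ℝ) where
  carrier := { e | ∃ a b : ℝ, 0 < a ∧ ∀ x, e x = a * x + b }
  one_mem' := ⟨1, 0, one_pos, fun x => by simp⟩
  mul_mem' := by
    rintro e₁ e₂ ⟨a₁, b₁, ha₁, h₁⟩ ⟨a₂, b₂, ha₂, h₂⟩
    refine ⟨a₁ * a₂, a₁ * b₂ + b₁, mul_pos ha₁ ha₂, fun x => ?_⟩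
    simp only [Equiv.Perm.mul_apply, h₁, h₂]; ring
  inv_mem' := by
    rintro e ⟨a, b, ha, h⟩
    refine ⟨a⁻¹, -b / a, inv_pos.mpr ha, fun x => ?_⟩
    have key : e (a⁻¹ * x + -b / a) = x := by rw [h]; field_simp; ring
    conv_lhs => rw [← key]
    rw [Equiv.Perm.coe_inv, Equiv.symm_apply_apply]

/-- The semidirect product `G = ℤ ⋉_A H`, where the generator `a` of the `ℤ`-factor acts
on the subgroup `H ≤ ℚ^d` by the restriction of the matrix `A`; this restriction (which is
well defined exactly when `A(H) = H`) is encoded as an additive automorphism `e` of `H`. -/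
abbrev GSd {d : ℕ} (H : AddSubgroup (Fin d → ℚ)) (e : H ≃+ H) : Type :=
  SemidirectProduct (Multiplicative H) (Multiplicative ℤ)
    (zpowersHom (MulAut (Multiplicative H)) (AddEquiv.toMultiplicative e))

/-- The element `(n, h)` of `G = ℤ ⋉_A H`; thus `a = elemSd 1 0` and `H` is identified
with the elements `elemSd 0 h`. -/
def elemSd {d : ℕ} {H : AddSubgroup (Fin d → ℚ)} {e : H ≃+ H} (n : ℤ) (b : H) : GSd H e :=
  ⟨Multiplicative.ofAdd b, Multiplicative.ofAdd n⟩

namespace Stmt2Aux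

/-! ### Affine maps: slope and translation part -/

def sl (g : AffPos) : ℝ := (g : Equiv.Perm ℝ) 1 - (g : Equiv.Perm ℝ) 0
def tr (g : AffPos) : ℝ := (g : Equiv.Perm ℝ) 0

lemma spec (g : AffPos) : 0 < sl g ∧ ∀ x : ℝ, (g : Equiv.Perm ℝ) x = sl g * x + tr g := by
  obtain ⟨a, b, ha, h⟩ := g.2
  have hsl : sl g = a := by simp [sl, h]
  have htr : tr g = b := by simp [tr, h]
  exact ⟨hsl ▸ ha, fun x => by rw [hsl, htr, h]⟩

lemma aff_apply (g : AffPos) (x : ℝ) : (g : Equiv.Perm ℝ) x = sl g * x + tr g := (spec g).2 x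

lemma sl_pos (g : AffPos) : 0 < sl g := (spec g).1

lemma sl_ne_zero (g : AffPos) : sl g ≠ 0 := ne_of_gt (sl_pos g)

lemma eq_of_apply (g : AffPos) (a b : ℝ) (h : ∀ x, (g : Equiv.Perm ℝ) x = a * x + b) :
    sl g = a ∧ tr g = b := by
  have h0 := h 0
  have h1 := h 1
  rw [aff_apply] at h0 h1
  constructor <;> [skip; skip] <;> nlinarith [h0, h1]

lemma mul_apply (g h : AffPos) (x : ℝ) :
    ((g * h : AffPos) : Equiv.Perm ℝ) x = sl g * (sl h * x + tr h) + tr g := by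
  rw [Subgroup.coe_mul, Equiv.Perm.mul_apply, aff_apply, aff_apply]

lemma sl_mul (g h : AffPos) : sl (g * h) = sl g * sl h :=
  (eq_of_apply _ (sl g * sl h) (sl g * tr h + tr g) (fun x => by rw [mul_apply]; ring)).1

lemma tr_mul (g h : AffPos) : tr (g * h) = sl g * tr h + tr g :=
  (eq_of_apply _ (sl g * sl h) (sl g * tr h + tr g) (fun x => by rw [mul_apply]; ring)).2

lemma sl_one : sl (1 : AffPos) = 1 :=
  (eq_of_apply 1 1 0 (fun x => by simp)).1

lemma tr_one : tr (1 : AffPos) = 0 :=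
  (eq_of_apply 1 1 0 (fun x => by simp)).2

lemma sl_inv (g : AffPos) : sl g⁻¹ = (sl g)⁻¹ := by
  have := sl_mul g g⁻¹
  rw [mul_inv_cancel, sl_one] at this
  exact (inv_eq_of_mul_eq_one_right this.symm).symm

lemma tr_inv (g : AffPos) : tr g⁻¹ = -tr g / sl g := by
  have := tr_mul g g⁻¹
  rw [mul_inv_cancel, tr_one] at this
  rw [eq_div_iff (sl_ne_zero g)]
  linear_combination -this

lemma ext' (g h : AffPos) (h1 : sl g = sl h) (h2 : tr g = tr h) : g = h :=
  Subtype.ext (Equiv.ext fun x => by rw [aff_apply, aff_apply, h1, h2])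

def slHom : AffPos →* ℝˣ where
  toFun g := Units.mk0 (sl g) (sl_ne_zero g)
  map_one' := by ext; simp [sl_one]
  map_mul' g h := by ext; simp [sl_mul]

lemma sl_zpow (g : AffPos) (n : ℤ) : sl (g ^ n) = sl g ^ n := by
  have := congrArg (Units.val) (map_zpow slHom g n)
  simpa [slHom, Units.val_zpow_eq_zpow_val] using this

lemma comm_of_fixed (g h : AffPos) (p : ℝ) (hg : (g : Equiv.Perm ℝ) p = p)
    (hh : (h : Equiv.Perm ℝ) p = p) : g * h = h * g := by
  rw [aff_apply] at hg hh
  refine ext' _ _ (by rw [sl_mul, sl_mul, mul_comm]) ?_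
  rw [tr_mul, tr_mul]
  linear_combination (1 - sl h) * hg + (sl g - 1) * hh

lemma fixed_unique (g : AffPos) (hg : sl g ≠ 1) (x y : ℝ)
    (hx : (g : Equiv.Perm ℝ) x = x) (hy : (g : Equiv.Perm ℝ) y = y) : x = y := by
  rw [aff_apply] at hx hy
  have h1 : (sl g - 1) * x = (sl g - 1) * y := by ring_nf; nlinarith [hx, hy]
  have h2 : sl g - 1 ≠ 0 := sub_ne_zero.mpr hg
  exact mul_left_cancel₀ h2 h1

lemma fixes_of_comm (f g : AffPos) (hf : sl f ≠ 1) (p : ℝ) (hp : (f : Equiv.Perm ℝ) p = p)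
    (hc : f * g = g * f) : (g : Equiv.Perm ℝ) p = p := by
  have key : (f : Equiv.Perm ℝ) ((g : Equiv.Perm ℝ) p) = (g : Equiv.Perm ℝ) p := by
    have := congrArg (fun z : AffPos => (z : Equiv.Perm ℝ) p) hc
    simpa [Equiv.Perm.mul_apply, hp] using this
  exact fixed_unique f hf _ _ key hp

/-! ### Semidirect product lemmas -/

variable {d : ℕ} {H : AddSubgroup (Fin d → ℚ)} {e : H ≃+ H}

lemma elemSd_zero_eq_inl (h : H) :
    (elemSd 0 h : GSd H e) = SemidirectProduct.inl (Multiplicative.ofAdd h) := rfl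

lemma elemSd_one_zero_eq_inr :
    (elemSd 1 0 : GSd H e) = SemidirectProduct.inr (Multiplicative.ofAdd 1) := rfl

lemma elemSd_mul_H (h h' : H) : (elemSd 0 h : GSd H e) * elemSd 0 h' = elemSd 0 (h + h') := by
  rw [elemSd_zero_eq_inl, elemSd_zero_eq_inl, elemSd_zero_eq_inl, ← _root_.map_mul]
  rfl

lemma elemSd_zero_zero : (elemSd 0 0 : GSd H e) = 1 := rfl

lemma elemSd_decomp (n : ℤ) (h : H) :
    (elemSd n h : GSd H e) = elemSd 0 h * (elemSd 1 0) ^ n := by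
  rw [elemSd_zero_eq_inl, elemSd_one_zero_eq_inr, ← map_zpow]
  have h1 : (Multiplicative.ofAdd (1 : ℤ)) ^ n = Multiplicative.ofAdd n := by
    rw [← ofAdd_zsmul]; simp
  rw [h1, ← SemidirectProduct.mk_eq_inl_mul_inr]
  rfl

lemma elemSd_conj (h : H) :
    (elemSd 1 0 : GSd H e) * elemSd 0 h * (elemSd 1 0)⁻¹ = elemSd 0 (e h) := by
  rw [elemSd_zero_eq_inl, elemSd_one_zero_eq_inr, ← map_inv, ← SemidirectProduct.inl_aut]
  rfl

lemma elemSd_surj (g : GSd H e) :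
    g = elemSd (Multiplicative.toAdd g.right) (Multiplicative.toAdd g.left) := by
  cases g; rfl

/-! ### Clearing denominators -/

lemma rat_mul_den (q : ℚ) : q * (q.den : ℚ) = (q.num : ℚ) := by
  have hd : (q.den : ℚ) ≠ 0 := Nat.cast_ne_zero.mpr q.den_nz
  conv_lhs => lhs; rw [← Rat.num_div_den q]
  rw [div_mul_cancel₀ _ hd]

lemma exists_nsmul_mem_closure {d : ℕ} (s : Set (Fin d → ℚ)) (x : Fin d → ℚ)
    (hx : x ∈ Submodule.span ℚ s) :
    ∃ N : ℕ, 0 < N ∧ (N : ℕ) • x ∈ AddSubgroup.closure s := by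
  induction hx using Submodule.span_induction with
  | mem y hy => exact ⟨1, one_pos, by simpa using AddSubgroup.subset_closure hy⟩
  | zero => exact ⟨1, one_pos, by simpa using (AddSubgroup.closure s).zero_mem⟩
  | add y z _ _ hy hz =>
      obtain ⟨N₁, hN₁, h₁⟩ := hy
      obtain ⟨N₂, hN₂, h₂⟩ := hz
      refine ⟨N₁ * N₂, Nat.mul_pos hN₁ hN₂, ?_⟩
      have key : (N₁ * N₂) • (y + z) = N₂ • (N₁ • y) + N₁ • (N₂ • z) := by
        rw [smul_add, smul_smul, smul_smul, Nat.mul_comm N₂ N₁]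
      rw [key]
      exact AddSubgroup.add_mem _ (AddSubgroup.nsmul_mem _ h₁ _) (AddSubgroup.nsmul_mem _ h₂ _)
  | smul q y _ hy =>
      obtain ⟨N, hN, h⟩ := hy
      refine ⟨N * q.den, Nat.mul_pos hN q.pos, ?_⟩
      have main : (((N * q.den : ℕ)) : ℚ) * q = ((q.num * N : ℤ) : ℚ) := by
        push_cast
        rw [mul_assoc, mul_comm ((q.den : ℚ)) q, rat_mul_den, mul_comm]
      have e1 : (N * q.den : ℕ) • (q • y) = (q.num * (N : ℤ)) • y := by
        rw [← Nat.cast_smul_eq_nsmul ℚ, smul_smul, main, Int.cast_smul_eq_zsmul]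
      rw [e1, mul_smul, natCast_zsmul]
      exact AddSubgroup.zsmul_mem _ h _

end Stmt2Aux
open Stmt2Aux in
set_option maxHeartbeats 1000000 in
/-- Every homomorphism `ψ : ℤ ⋉_A H → Aff₊(ℝ)` with non-Abelian image
sends `H` to translations and is conjugate in `Aff₊(ℝ)` to `(n,h) ↦ (x ↦ λⁿ x + ⟨v,h⟩)`
for some `λ > 0`, `λ ≠ 1` and some vector `v` with `Aᵀ v = λ v`. -/
theorem stmt_2 {d : ℕ} (hd : 0 < d) (A : Matrix (Fin d) (Fin d) ℚ) (hA : IsUnit A.det)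
    (H : AddSubgroup (Fin d → ℚ)) (e : H ≃+ H)
    (he : ∀ h : H, ((e h : Fin d → ℚ)) = A.mulVec (h : Fin d → ℚ))
    (hspan : Submodule.span ℚ (H : Set (Fin d → ℚ)) = ⊤)
    (ψ : GSd H e →* AffPos) (hnab : ∃ g₁ g₂ : GSd H e, ψ g₁ * ψ g₂ ≠ ψ g₂ * ψ g₁) :
    (∀ h : H, ∃ t : ℝ, ∀ x : ℝ, ((ψ (elemSd 0 h) : Equiv.Perm ℝ)) x = x + t) ∧
    ∃ lam : ℝ, 0 < lam ∧ lam ≠ 1 ∧ ∃ v : Fin d → ℝ,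
      (A.map (fun q : ℚ => (q : ℝ))).transpose.mulVec v = lam • v ∧
      ∃ γ : AffPos, ∀ (n : ℤ) (h : H) (x : ℝ),
        ((γ * ψ (elemSd n h) * γ⁻¹ : AffPos) : Equiv.Perm ℝ) x
          = lam ^ n * x + ∑ i, v i * ((h : Fin d → ℚ) i : ℝ) := by
  classical
  have hcomm_im : ∀ h h' : H,
      ψ (elemSd 0 h) * ψ (elemSd 0 h') = ψ (elemSd 0 h') * ψ (elemSd 0 h) := by
    intro h h'
    rw [← _root_.map_mul, ← _root_.map_mul, elemSd_mul_H, elemSd_mul_H, add_comm]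
  have hconj : ∀ h : H,
      ψ (elemSd 1 0) * ψ (elemSd 0 h) * (ψ (elemSd 1 0))⁻¹ = ψ (elemSd 0 (e h)) := by
    intro h
    rw [← _root_.map_inv, ← _root_.map_mul, ← _root_.map_mul, elemSd_conj]
  -- Step 1: `H` is mapped to translations.
  have claim1 : ∀ h : H, sl (ψ (elemSd 0 h)) = 1 := by
    by_contra hcon
    push_neg at hcon
    obtain ⟨h₀, hμ⟩ := hcon
    set f₀ := ψ (elemSd 0 h₀) with hf₀
    set p := tr f₀ / (1 - sl f₀) with hp
    have hne : (1 : ℝ) - sl f₀ ≠ 0 := sub_ne_zero.mpr (Ne.symm hμ)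
    have hfix : (f₀ : Equiv.Perm ℝ) p = p := by
      rw [aff_apply, hp]
      field_simp
      ring
    have hH : ∀ h : H, (ψ (elemSd 0 h) : Equiv.Perm ℝ) p = p := fun h =>
      fixes_of_comm f₀ _ hμ p hfix (hcomm_im h₀ h)
    have hαfix : (ψ (elemSd 1 0) : Equiv.Perm ℝ) p = p := by
      have h1 := hconj h₀
      have hs1 : sl (ψ (elemSd 0 (e h₀))) = sl f₀ := by
        rw [← h1, sl_mul, sl_mul, sl_inv, ← hf₀, mul_comm (sl (ψ (elemSd 1 0))) (sl f₀),
          mul_assoc, mul_inv_cancel₀ (sl_ne_zero _), mul_one]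
      have hfix1 : (ψ (elemSd 0 (e h₀)) : Equiv.Perm ℝ) ((ψ (elemSd 1 0) : Equiv.Perm ℝ) p)
          = (ψ (elemSd 1 0) : Equiv.Perm ℝ) p := by
        rw [← h1, Subgroup.coe_mul, Subgroup.coe_mul]
        simp only [Equiv.Perm.mul_apply, InvMemClass.coe_inv, Equiv.Perm.coe_inv, Equiv.symm_apply_apply]
        rw [← hf₀, hfix]
      exact fixed_unique _ (hs1 ▸ hμ) _ _ hfix1 (hH (e h₀))
    have hall : ∀ g : GSd H e, (ψ g : Equiv.Perm ℝ) p = p := by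
      intro g
      rw [elemSd_surj g, elemSd_decomp, _root_.map_mul, map_zpow, Subgroup.coe_mul,
        Equiv.Perm.mul_apply, SubgroupClass.coe_zpow,
        Equiv.Perm.zpow_apply_eq_self_of_apply_eq_self hαfix]
      exact hH _
    obtain ⟨g₁, g₂, hg⟩ := hnab
    exact hg (comm_of_fixed _ _ p (hall g₁) (hall g₂))
  refine ⟨fun h => ⟨tr (ψ (elemSd 0 h)), fun x => by rw [aff_apply, claim1, one_mul]⟩, ?_⟩
  set lam := sl (ψ (elemSd 1 0)) with hlam
  have hlampos : 0 < lam := sl_pos _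
  have hlamne0 : lam ≠ 0 := ne_of_gt hlampos
  have claimS : ∀ (n : ℤ) (h : H), sl (ψ (elemSd n h)) = lam ^ n := by
    intro n h
    rw [elemSd_decomp, _root_.map_mul, sl_mul, claim1, map_zpow, sl_zpow, one_mul]
  -- Step 2: `lam ≠ 1`.
  have hlamne : lam ≠ 1 := by
    intro h1
    obtain ⟨g₁, g₂, hg⟩ := hnab
    have t : ∀ g : GSd H e, sl (ψ g) = 1 := by
      intro g
      rw [elemSd_surj g, claimS, h1, _root_.one_zpow]
    exact hg (ext' _ _ (by rw [sl_mul, sl_mul, mul_comm])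
      (by rw [tr_mul, tr_mul, t g₁, t g₂, one_mul, one_mul, add_comm]))
  -- the translation part on `H`, as an additive homomorphism
  set τ : H →+ ℝ :=
    { toFun := fun h => tr (ψ (elemSd 0 h))
      map_zero' := by
        show tr (ψ (elemSd 0 (0 : H))) = 0
        rw [elemSd_zero_zero, _root_.map_one, tr_one]
      map_add' := fun h h' => by
        show tr (ψ (elemSd 0 (h + h'))) = tr (ψ (elemSd 0 h)) + tr (ψ (elemSd 0 h'))
        rw [← elemSd_mul_H, _root_.map_mul, tr_mul, claim1, one_mul, add_comm] } with hτdef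
  have τ_rel : ∀ h : H, τ (e h) = lam * τ h := by
    intro h
    have h1 := congrArg tr (hconj h)
    rw [tr_mul, tr_mul, tr_inv, sl_mul, claim1, mul_one] at h1
    show tr (ψ (elemSd 0 (e h))) = lam * tr (ψ (elemSd 0 h))
    rw [← h1, hlam]
    have hs0 := sl_ne_zero (ψ (elemSd 1 0))
    field_simp
    ring
  -- Step 3: extend `τ` to a `ℚ`-linear map `L` on `ℚ^d`.
  obtain ⟨s, hs_sub, hs_sp, hs_li⟩ := exists_linearIndependent ℚ (H : Set (Fin d → ℚ))
  have hs_top : Submodule.span ℚ s = ⊤ := by rw [hs_sp, hspan]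
  let b : Module.Basis s ℚ (Fin d → ℚ) :=
    Module.Basis.mk hs_li (by rw [Subtype.range_coe, hs_top])
  let L : (Fin d → ℚ) →ₗ[ℚ] ℝ := b.constr ℚ (fun i => τ ⟨i.1, hs_sub i.2⟩)
  have hLs : ∀ x (hx : x ∈ s), L x = τ ⟨x, hs_sub hx⟩ := by
    intro x hx
    have h1 : L (b ⟨x, hx⟩) = τ ⟨x, hs_sub hx⟩ := b.constr_basis _ _ _
    rwa [show b ⟨x, hx⟩ = x from by simp [b]] at h1
  set δ : H →+ ℝ := (L.toAddMonoidHom.comp H.subtype) - τ with hδdef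
  have hδ_apply : ∀ h : H, δ h = L (h : Fin d → ℚ) - τ h := fun h => rfl
  have hδs : AddSubgroup.closure s ≤ AddSubgroup.map H.subtype δ.ker := by
    rw [AddSubgroup.closure_le]
    intro x hx
    refine ⟨⟨x, hs_sub hx⟩, ?_, rfl⟩
    have hx0 : δ ⟨x, hs_sub hx⟩ = 0 := by rw [hδ_apply, hLs x hx, sub_self]
    exact hx0
  have hLτ : ∀ h : H, L (h : Fin d → ℚ) = τ h := by
    intro h
    have hδh : δ h = 0 := by
      obtain ⟨N, hN, hmem⟩ := exists_nsmul_mem_closure s (h : Fin d → ℚ)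
        (by rw [hs_top]; trivial)
      obtain ⟨k, hk, hkval⟩ := hδs hmem
      have hcoe : ((N • h : H) : Fin d → ℚ) = N • (h : Fin d → ℚ) := rfl
      have hNh : (N • h : H) = k := Subtype.ext (hcoe.trans hkval.symm)
      have h0 : δ (N • h) = 0 := by rw [hNh]; exact hk
      rw [map_nsmul, nsmul_eq_mul] at h0
      rcases mul_eq_zero.mp h0 with h' | h'
      · exact absurd h' (Nat.cast_ne_zero.mpr hN.ne')
      · exact h'
    have := hδ_apply h
    rw [hδh] at this
    linarith [this.symm]
  -- Step 4: `L ∘ A = lam • L`.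
  have hAL : ∀ x : Fin d → ℚ, L (A.mulVec x) = lam * L x := by
    have hfg : L ∘ₗ A.mulVecLin = (lam • L : (Fin d → ℚ) →ₗ[ℚ] ℝ) := by
      apply LinearMap.ext_on hspan
      intro x hx
      have h1 : (L ∘ₗ A.mulVecLin) x = L (((e ⟨x, hx⟩ : H) : Fin d → ℚ)) := by
        rw [he]; rfl
      rw [h1, hLτ, τ_rel, ← hLτ]
      rfl
    intro x
    have := DFunLike.congr_fun hfg x
    simpa using this
  -- the eigenvector `v`
  set v : Fin d → ℝ := fun i => L (Pi.single i 1) with hv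
  have hLx : ∀ x : Fin d → ℚ, L x = ∑ i, v i * ((x i : ℚ) : ℝ) := by
    intro x
    have hx : x = ∑ i, x i • (Pi.single i (1 : ℚ) : Fin d → ℚ) := by
      conv_lhs => rw [← Finset.univ_sum_single x]
      congr 1
      funext i
      rw [← Pi.single_smul, smul_eq_mul, mul_one]
    conv_lhs => rw [hx]
    rw [map_sum]
    congr 1
    funext i
    rw [_root_.map_smul, Rat.smul_def, mul_comm]
  refine ⟨lam, hlampos, hlamne, v, ?_, ?_⟩
  · -- eigenvalue equation
    funext i
    have h1 := hAL (Pi.single i 1)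
    rw [Matrix.mulVec_single, hLx] at h1
    have h2 : L (Pi.single i (1 : ℚ)) = v i := rfl
    rw [h2] at h1
    have h3 : ((A.map (fun q : ℚ => (q : ℝ))).transpose.mulVec v) i
        = ∑ j, v j * ((A j i : ℚ) : ℝ) := by
      simp only [Matrix.mulVec, dotProduct, Matrix.transpose_apply, Matrix.map_apply]
      exact Finset.sum_congr rfl fun j _ => mul_comm _ _
    rw [h3, Pi.smul_apply, smul_eq_mul, ← h1]
    exact Finset.sum_congr rfl fun j _ => by simp
  · -- the conjugating element γ
    set c := tr (ψ (elemSd 1 0)) with hc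
    set p := c / (1 - lam) with hpdef
    have hne : (1 : ℝ) - lam ≠ 0 := sub_ne_zero.mpr (Ne.symm hlamne)
    have hfixp : (ψ (elemSd 1 0) : Equiv.Perm ℝ) p = p := by
      rw [aff_apply, ← hlam, ← hc, hpdef]
      field_simp
      ring
    have hγmem : Equiv.addRight (-p) ∈ AffPos :=
      ⟨1, -p, one_pos, fun x => by simp [Equiv.coe_addRight]⟩
    set γ : AffPos := ⟨Equiv.addRight (-p), hγmem⟩ with hγdef
    refine ⟨γ, ?_⟩
    have hγ : sl γ = 1 ∧ tr γ = -p :=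
      eq_of_apply γ 1 (-p) (fun x => by
        show x + (-p) = 1 * x + (-p)
        rw [one_mul])
    intro n h x
    have hzfix : (((ψ (elemSd 1 0)) ^ n : AffPos) : Equiv.Perm ℝ) p = p := by
      rw [SubgroupClass.coe_zpow]
      exact Equiv.Perm.zpow_apply_eq_self_of_apply_eq_self hfixp n
    have hzsl : sl ((ψ (elemSd 1 0)) ^ n) = lam ^ n := by rw [sl_zpow, ← hlam]
    have hztr : tr ((ψ (elemSd 1 0)) ^ n) = p - lam ^ n * p := by
      have := hzfix
      rw [aff_apply, hzsl] at this
      linarith [this]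
    have hsl_f : sl (ψ (elemSd n h)) = lam ^ n := claimS n h
    have htr_f : tr (ψ (elemSd n h)) = p - lam ^ n * p + τ h := by
      rw [elemSd_decomp, _root_.map_mul, tr_mul, claim1, one_mul, map_zpow, hztr]
      have : τ h = tr (ψ (elemSd 0 h)) := rfl
      rw [this]
    have hslΓ : sl (γ * ψ (elemSd n h) * γ⁻¹) = lam ^ n := by
      rw [sl_mul, sl_mul, sl_inv, hγ.1, hsl_f, one_mul, inv_one, mul_one]
    have htrΓ : tr (γ * ψ (elemSd n h) * γ⁻¹) = τ h := by
      rw [tr_mul, tr_inv, sl_mul, hγ.1, one_mul, hsl_f, tr_mul, hγ.1, hγ.2, one_mul,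
        htr_f]
      field_simp
      ring
    rw [aff_apply, hslΓ, htrΓ, ← hLτ h, hLx]

end
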